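/- Let ϖ be a finite Borel measure on ℝ^n with ϖ(B(x,r)) ≤ C r^{θ-ε} for all x and r > 0 (and ε < θ), and let p_t(x,y) ≤ C' ρ_t^n (f_up(ρ_t ·) * Q_t)(y-x) for t ∈ (0,1] with f_up(z) = a_3 e^{-a_4|z|}, Q_t sub-probability measures, and ρ_t ≤ c t^{-1/α}. If θ - ε > n - α, then ∫_0^1 ∫ p_t(x,y) ϖ(dy) dt is bounded uniformly in x; in particular for n = 2 one gets ∫_0^1 sup_x ∫ p_t(x,y) ϖ(dy) dt ≤ c'' ∫_0^1 t^{-(θ-2+ε')/α} dt < ∞ when 2 - θ + ε' < α. -/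

import Mathlib

open MeasureTheory Set
open scoped ENNReal

lemma rpow_le_exp_half (s : ℝ) (hs : 0 < s) (u : ℝ) (hu : 0 ≤ u) :
    u ^ s ≤ (2*s) ^ s * Real.exp (u/2) := by
  rcases hu.eq_or_lt with h0 | h0
  · rw [← h0, Real.zero_rpow hs.ne']
    positivity
  · have h2s : 0 < 2*s := by linarith
    have hlog : Real.log (u / (2*s)) ≤ u/(2*s) - 1 :=
      Real.log_le_sub_one_of_pos (by positivity)
    have hlogu : Real.log u ≤ Real.log (2*s) + (u/(2*s) - 1) := by
      have h := Real.log_div h0.ne' h2s.ne'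
      linarith
    have hmul : s * Real.log u ≤ s * Real.log (2*s) + (u/2 - s) := by
      have h1 := mul_le_mul_of_nonneg_left hlogu hs.le
      have h2 : s * (u/(2*s)) = u/2 := by field_simp
      nlinarith
    calc u ^ s = Real.exp (Real.log u * s) := Real.rpow_def_of_pos h0 s
      _ ≤ Real.exp (Real.log (2*s) * s + u/2) := by
          apply Real.exp_le_exp.2; nlinarith
      _ = (2*s)^s * Real.exp (u/2) := by
          rw [Real.exp_add, Real.rpow_def_of_pos h2s]

lemma frostman_exp_bound {n : ℕ} (ϖ : Measure (EuclideanSpace ℝ (Fin n)))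
    (C s : ℝ) (hC : 0 < C) (hs : 0 < s)
    (hϖ : ∀ x, ∀ r : ℝ, 0 < r → ϖ (Metric.ball x r) ≤ ENNReal.ofReal (C * r ^ s))
    (lam : ℝ) (hlam : 0 < lam) (w : EuclideanSpace ℝ (Fin n)) :
    ∫⁻ y, ENNReal.ofReal (Real.exp (-(lam * ‖w - y‖))) ∂ϖ ≤
      ENNReal.ofReal (C * (2*s)^s * Real.exp 2⁻¹ * (1 - Real.exp (-2⁻¹))⁻¹ * lam ^ (-s)) := by
  set q := Real.exp (-2⁻¹) with hqdef
  have hq0 : 0 < q := Real.exp_pos _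
  have hq1 : q < 1 := by
    rw [hqdef]
    calc Real.exp (-2⁻¹) < Real.exp 0 := Real.exp_lt_exp.2 (by norm_num)
      _ = 1 := Real.exp_zero
  set D := C * lam^(-s) * ((2*s)^s * Real.exp 2⁻¹) with hD
  have hDpos : 0 ≤ D := by
    rw [hD]; positivity
  set A : ℕ → Set (EuclideanSpace ℝ (Fin n)) :=
    fun k => Metric.ball w ((k+1)/lam) \ Metric.ball w ((k:ℝ)/lam) with hA
  have hcover : (Set.univ : Set (EuclideanSpace ℝ (Fin n))) ⊆ ⋃ k : ℕ, A k := by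
    intro y _
    simp only [Set.mem_iUnion]
    refine ⟨⌊lam * ‖w - y‖⌋₊, ?_, ?_⟩
    · rw [Metric.mem_ball, dist_eq_norm, norm_sub_rev, lt_div_iff₀ hlam]
      have h := Nat.lt_floor_add_one (lam * ‖w - y‖)
      push_cast at h ⊢
      linarith
    · intro hmem
      rw [Metric.mem_ball, dist_eq_norm, norm_sub_rev, lt_div_iff₀ hlam] at hmem
      have h := Nat.floor_le (show (0:ℝ) ≤ lam * ‖w - y‖ by positivity)
      linarith
  have hterm : ∀ k : ℕ, ∫⁻ y in A k, ENNReal.ofReal (Real.exp (-(lam * ‖w - y‖))) ∂ϖ ≤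
      ENNReal.ofReal (D * q^k) := by
    intro k
    have hsub : A k ⊆ Metric.ball w ((k+1)/lam) := Set.diff_subset
    have hbd : ∀ y ∈ A k, ENNReal.ofReal (Real.exp (-(lam * ‖w - y‖))) ≤
        ENNReal.ofReal (Real.exp (-(k:ℝ))) := by
      intro y hy
      have hy2 := hy.2
      have : ¬ (dist y w < (k:ℝ)/lam) := hy2
      rw [dist_eq_norm, norm_sub_rev, lt_div_iff₀ hlam, not_lt] at this
      apply ENNReal.ofReal_le_ofReal
      apply Real.exp_le_exp.2
      nlinarith
    calc ∫⁻ y in A k, ENNReal.ofReal (Real.exp (-(lam * ‖w - y‖))) ∂ϖ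
        ≤ ∫⁻ _ in A k, ENNReal.ofReal (Real.exp (-(k:ℝ))) ∂ϖ :=
          setLIntegral_mono measurable_const hbd
      _ = ENNReal.ofReal (Real.exp (-(k:ℝ))) * ϖ (A k) := setLIntegral_const _ _
      _ ≤ ENNReal.ofReal (Real.exp (-(k:ℝ))) * ENNReal.ofReal (C * (((k:ℝ)+1)/lam) ^ s) := by
          apply mul_le_mul_right
          exact (measure_mono hsub).trans (by exact_mod_cast hϖ w _ (by positivity))
      _ = ENNReal.ofReal (Real.exp (-(k:ℝ)) * (C * (((k:ℝ)+1)/lam) ^ s)) :=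
          (ENNReal.ofReal_mul (Real.exp_nonneg _)).symm
      _ ≤ ENNReal.ofReal (D * q^k) := by
          apply ENNReal.ofReal_le_ofReal
          have h1 : (((k:ℝ)+1)/lam)^s = ((k:ℝ)+1)^s * lam^(-s) := by
            rw [Real.div_rpow (by positivity) hlam.le, Real.rpow_neg hlam.le, div_eq_mul_inv]
          have h2 : ((k:ℝ)+1)^s ≤ (2*s)^s * Real.exp (((k:ℝ)+1)/2) :=
            rpow_le_exp_half s hs _ (by positivity)
          have h3 : q^k = Real.exp ((k:ℝ) * (-2⁻¹)) := by
            rw [hqdef, ← Real.exp_nat_mul]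
          have h4 : Real.exp (-(k:ℝ)) * Real.exp (((k:ℝ)+1)/2) =
              Real.exp 2⁻¹ * Real.exp ((k:ℝ) * (-2⁻¹)) := by
            rw [← Real.exp_add, ← Real.exp_add]; congr 1; ring
          calc Real.exp (-(k:ℝ)) * (C * (((k:ℝ)+1)/lam) ^ s)
              = C * lam^(-s) * (Real.exp (-(k:ℝ)) * ((k:ℝ)+1)^s) := by rw [h1]; ring
            _ ≤ C * lam^(-s) * (Real.exp (-(k:ℝ)) * ((2*s)^s * Real.exp (((k:ℝ)+1)/2))) := by
                apply mul_le_mul_of_nonneg_left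
                  (mul_le_mul_of_nonneg_left h2 (Real.exp_nonneg _)) (by positivity)
            _ = C * lam^(-s) * (2*s)^s * (Real.exp (-(k:ℝ)) * Real.exp (((k:ℝ)+1)/2)) := by ring
            _ = C * lam^(-s) * (2*s)^s * (Real.exp 2⁻¹ * Real.exp ((k:ℝ) * (-2⁻¹))) := by rw [h4]
            _ = D * q^k := by rw [h3, hD]; ring
  calc ∫⁻ y, ENNReal.ofReal (Real.exp (-(lam * ‖w - y‖))) ∂ϖ
      = ∫⁻ y in Set.univ, ENNReal.ofReal (Real.exp (-(lam * ‖w - y‖))) ∂ϖ :=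
        (setLIntegral_univ _).symm
    _ ≤ ∫⁻ y in ⋃ k : ℕ, A k, ENNReal.ofReal (Real.exp (-(lam * ‖w - y‖))) ∂ϖ :=
        lintegral_mono_set hcover
    _ ≤ ∑' k : ℕ, ∫⁻ y in A k, ENNReal.ofReal (Real.exp (-(lam * ‖w - y‖))) ∂ϖ :=
        lintegral_iUnion_le _ _
    _ ≤ ∑' k : ℕ, ENNReal.ofReal (D * q^k) := ENNReal.tsum_le_tsum hterm
    _ = ∑' k : ℕ, ENNReal.ofReal D * (ENNReal.ofReal q)^k := by
        apply tsum_congr; intro k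
        rw [ENNReal.ofReal_mul hDpos, ENNReal.ofReal_pow hq0.le]
    _ = ENNReal.ofReal D * (1 - ENNReal.ofReal q)⁻¹ := by
        rw [ENNReal.tsum_mul_left, ENNReal.tsum_geometric]
    _ = ENNReal.ofReal D * ENNReal.ofReal ((1-q)⁻¹) := by
        congr 1
        rw [ENNReal.ofReal_inv_of_pos (by linarith), ENNReal.ofReal_sub _ hq0.le,
          ENNReal.ofReal_one]
    _ = ENNReal.ofReal (D * (1-q)⁻¹) := (ENNReal.ofReal_mul hDpos).symm
    _ = ENNReal.ofReal (C * (2*s)^s * Real.exp 2⁻¹ * (1 - q)⁻¹ * lam ^ (-s)) := by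
        congr 1; rw [hD]; ring

set_option maxHeartbeats 2000000

/-- If `ϖ` is a finite Frostman measure with `ϖ(B(x,r)) ≤ C r^{θ-ε}` and the
transition density satisfies the compound-kernel upper bound
`p_t(x,y) ≤ C' ρ_t^n (f_up(ρ_t ·) * Q_t)(y-x)` with `f_up(z) = a₃ e^{-a₄|z|}`,
`ρ_t ≤ c t^{-1/α}`, and `θ - ε > n - α`, then `∫_0^1 ∫ p_t(x,y) ϖ(dy) dt`
is bounded uniformly in `x`. -/
theorem stmt14 {n : ℕ} (α θ ε C C' c a₃ a₄ : ℝ)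
    (hα : 0 < α) (hε : 0 < ε) (hθε : ε < θ) (hC : 0 < C) (hC' : 0 < C')
    (hc : 0 < c) (ha₃ : 0 < a₃) (ha₄ : 0 < a₄)
    (hcond : (n : ℝ) - α < θ - ε)
    (ϖ : Measure (EuclideanSpace ℝ (Fin n))) [IsFiniteMeasure ϖ]
    (hϖ : ∀ x, ∀ r : ℝ, 0 < r → ϖ (Metric.ball x r) ≤ ENNReal.ofReal (C * r ^ (θ - ε)))
    (ρ : ℝ → ℝ) (hρpos : ∀ t ∈ Set.Ioc (0 : ℝ) 1, 0 < ρ t)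
    (hρ : ∀ t ∈ Set.Ioc (0 : ℝ) 1, ρ t ≤ c * t ^ (-1 / α))
    (Q : ℝ → Measure (EuclideanSpace ℝ (Fin n)))
    (hQ : ∀ t : ℝ, Q t Set.univ ≤ 1)
    (p : ℝ → EuclideanSpace ℝ (Fin n) → EuclideanSpace ℝ (Fin n) → ℝ)
    (hp0 : ∀ t x y, 0 ≤ p t x y)
    (hp : ∀ t ∈ Set.Ioc (0 : ℝ) 1, ∀ x y,
        p t x y ≤ C' * ρ t ^ n *
          ∫ z, a₃ * Real.exp (-a₄ * (ρ t * ‖y - x - z‖)) ∂(Q t)) :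
    ∃ M : ℝ, ∀ x, (∫ t in Set.Ioc (0 : ℝ) 1, ∫ y, p t x y ∂ϖ) ≤ M := by
  classical
  set s := θ - ε with hs_def
  have hs : 0 < s := sub_pos.2 hθε
  have hq1 : Real.exp (-2⁻¹) < 1 := by
    calc Real.exp (-2⁻¹) < Real.exp 0 := Real.exp_lt_exp.2 (by norm_num)
      _ = 1 := Real.exp_zero
  have h1q : 0 < 1 - Real.exp (-2⁻¹) := by linarith
  set K := C * (2*s)^s * Real.exp 2⁻¹ * (1 - Real.exp (-2⁻¹))⁻¹ with hK
  have hKpos : 0 < K :=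
    mul_pos (mul_pos (mul_pos hC (Real.rpow_pos_of_pos (by linarith) _)) (Real.exp_pos _))
      (inv_pos.2 h1q)
  set C'' := C' * a₃ * K * a₄ ^ (-s) with hC''
  have hC''pos : 0 < C'' :=
    mul_pos (mul_pos (mul_pos hC' ha₃) hKpos) (Real.rpow_pos_of_pos ha₄ _)
  set β := (n:ℝ) - s with hβ
  have hβα : β < α := by rw [hβ, hs_def]; linarith
  set γ := max β 0 with hγ
  have hγ0 : 0 ≤ γ := le_max_right _ _
  have hγα : γ < α := max_lt hβα hα
  have hexp : (-1:ℝ) < -(γ/α) := by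
    have h : γ/α < 1 := (div_lt_one hα).2 hγα
    linarith
  set A := C' * a₃ * (ϖ Set.univ).toReal with hA
  have hA0 : 0 ≤ A := by
    rw [hA]; positivity
  set B := C'' * c ^ γ with hB
  have hB0 : 0 ≤ B := (mul_pos hC''pos (Real.rpow_pos_of_pos hc _)).le
  set G := fun t : ℝ => A + B * t ^ (-(γ/α)) with hG
  have hGnn : ∀ t ∈ Set.Ioc (0:ℝ) 1, 0 ≤ G t := fun t ht =>
    add_nonneg hA0 (mul_nonneg hB0 (Real.rpow_nonneg ht.1.le _))
  have hGint : IntegrableOn G (Set.Ioc (0:ℝ) 1) := by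
    have h1 : IntegrableOn (fun t : ℝ => t ^ (-(γ/α))) (Set.Ioc (0:ℝ) 1) := by
      have h := intervalIntegral.intervalIntegrable_rpow' (a := 0) (b := 1)
        (r := -(γ/α)) hexp
      rwa [intervalIntegrable_iff_integrableOn_Ioc_of_le (by norm_num)] at h
    exact (integrableOn_const measure_Ioc_lt_top.ne).add (h1.const_mul B)
  refine ⟨∫ t in Set.Ioc (0:ℝ) 1, G t, fun x => ?_⟩
  have claim : ∀ t ∈ Set.Ioc (0:ℝ) 1, (∫ y, p t x y ∂ϖ) ≤ G t := by
    intro t ht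
    have hρt : 0 < ρ t := hρpos t ht
    by_cases hint : Integrable (fun y => p t x y) ϖ
    · haveI : IsFiniteMeasure (Q t) := ⟨lt_of_le_of_lt (hQ t) ENNReal.one_lt_top⟩
      set lam := a₄ * ρ t with hlam
      have hlam0 : 0 < lam := mul_pos ha₄ hρt
      have hcont : ∀ y : EuclideanSpace ℝ (Fin n),
          Continuous fun z => a₃ * Real.exp (-a₄ * (ρ t * ‖y - x - z‖)) := by
        intro y; fun_prop
      have hzint : ∀ y, Integrable
          (fun z => a₃ * Real.exp (-a₄ * (ρ t * ‖y - x - z‖))) (Q t) := by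
        intro y
        apply Integrable.mono' (integrable_const a₃) ((hcont y).aestronglyMeasurable)
        filter_upwards with z
        rw [Real.norm_eq_abs, abs_of_nonneg (by positivity)]
        have he : Real.exp (-a₄ * (ρ t * ‖y - x - z‖)) ≤ 1 := by
          rw [← Real.exp_zero]
          apply Real.exp_le_exp.2
          have : 0 ≤ ρ t * ‖y - x - z‖ := by positivity
          nlinarith
        nlinarith
      set f : EuclideanSpace ℝ (Fin n) → EuclideanSpace ℝ (Fin n) → ℝ≥0∞ :=
        fun y z => ENNReal.ofReal (a₃ * Real.exp (-a₄ * (ρ t * ‖y - x - z‖))) with hf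
      set L := ∫⁻ y, ∫⁻ z, f y z ∂(Q t) ∂ϖ with hL
      have key : ∫⁻ y, ENNReal.ofReal (p t x y) ∂ϖ ≤ ENNReal.ofReal (C' * ρ t ^ n) * L := by
        rw [hL, ← lintegral_const_mul' _ _ ENNReal.ofReal_ne_top]
        apply lintegral_mono
        intro y
        calc ENNReal.ofReal (p t x y)
            ≤ ENNReal.ofReal (C' * ρ t ^ n *
              ∫ z, a₃ * Real.exp (-a₄ * (ρ t * ‖y - x - z‖)) ∂(Q t)) :=
              ENNReal.ofReal_le_ofReal (hp t ht x y)
          _ = ENNReal.ofReal (C' * ρ t ^ n) *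
              ENNReal.ofReal (∫ z, a₃ * Real.exp (-a₄ * (ρ t * ‖y - x - z‖)) ∂(Q t)) :=
              ENNReal.ofReal_mul (by positivity)
          _ ≤ ENNReal.ofReal (C' * ρ t ^ n) * ∫⁻ z, f y z ∂(Q t) := by
              apply mul_le_mul_right
              exact (ofReal_integral_eq_lintegral_ofReal (hzint y)
                (ae_of_all _ fun z => by positivity)).le
      have hmeasprod : AEMeasurable
          (fun yz : EuclideanSpace ℝ (Fin n) × EuclideanSpace ℝ (Fin n) =>
            f yz.1 yz.2) (ϖ.prod (Q t)) := by
        apply Continuous.aemeasurable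
        apply ENNReal.continuous_ofReal.comp
        fun_prop
      have hL2 : L ≤ ENNReal.ofReal (a₃ * (K * lam ^ (-s))) := by
        rw [hL, lintegral_lintegral_swap hmeasprod]
        have hin : ∀ z, ∫⁻ y, f y z ∂ϖ ≤ ENNReal.ofReal (a₃ * (K * lam ^ (-s))) := by
          intro z
          have heq : ∀ y : EuclideanSpace ℝ (Fin n), f y z =
              ENNReal.ofReal a₃ * ENNReal.ofReal (Real.exp (-(lam * ‖(x + z) - y‖))) := by
            intro y
            show ENNReal.ofReal (a₃ * Real.exp (-a₄ * (ρ t * ‖y - x - z‖))) = _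
            have hnorm : ‖y - x - z‖ = ‖(x + z) - y‖ := by
              rw [show y - x - z = -((x + z) - y) by abel, norm_neg]
            rw [hnorm, show -a₄ * (ρ t * ‖(x + z) - y‖) = -(lam * ‖(x + z) - y‖) by
              rw [hlam]; ring, ENNReal.ofReal_mul ha₃.le]
          calc ∫⁻ y, f y z ∂ϖ
              = ENNReal.ofReal a₃ * ∫⁻ y, ENNReal.ofReal (Real.exp (-(lam * ‖(x + z) - y‖))) ∂ϖ := by
                simp_rw [heq]
                rw [lintegral_const_mul' _ _ ENNReal.ofReal_ne_top]
            _ ≤ ENNReal.ofReal a₃ * ENNReal.ofReal (K * lam ^ (-s)) := by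
                apply mul_le_mul_right
                have := frostman_exp_bound ϖ C s hC hs hϖ lam hlam0 (x + z)
                rwa [← hK] at this
            _ = ENNReal.ofReal (a₃ * (K * lam ^ (-s))) := (ENNReal.ofReal_mul ha₃.le).symm
        calc ∫⁻ z, ∫⁻ y, f y z ∂ϖ ∂(Q t)
            ≤ ∫⁻ _, ENNReal.ofReal (a₃ * (K * lam ^ (-s))) ∂(Q t) := lintegral_mono hin
          _ = ENNReal.ofReal (a₃ * (K * lam ^ (-s))) * Q t Set.univ := lintegral_const _
          _ ≤ ENNReal.ofReal (a₃ * (K * lam ^ (-s))) * 1 := mul_le_mul_right (hQ t) _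
          _ = ENNReal.ofReal (a₃ * (K * lam ^ (-s))) := mul_one _
      have hL1 : L ≤ ENNReal.ofReal a₃ * ϖ Set.univ := by
        rw [hL]
        calc ∫⁻ y, ∫⁻ z, f y z ∂(Q t) ∂ϖ
            ≤ ∫⁻ _, ENNReal.ofReal a₃ ∂ϖ := by
              apply lintegral_mono
              intro y
              calc ∫⁻ z, f y z ∂(Q t) ≤ ∫⁻ _, ENNReal.ofReal a₃ ∂(Q t) := by
                    apply lintegral_mono
                    intro z
                    apply ENNReal.ofReal_le_ofReal
                    have he : Real.exp (-a₄ * (ρ t * ‖y - x - z‖)) ≤ 1 := by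
                      rw [← Real.exp_zero]
                      apply Real.exp_le_exp.2
                      have : 0 ≤ ρ t * ‖y - x - z‖ := by positivity
                      nlinarith
                    nlinarith
                _ = ENNReal.ofReal a₃ * Q t Set.univ := lintegral_const _
                _ ≤ ENNReal.ofReal a₃ * 1 := mul_le_mul_right (hQ t) _
                _ = ENNReal.ofReal a₃ := mul_one _
          _ = ENNReal.ofReal a₃ * ϖ Set.univ := lintegral_const _
      have hrepr : (∫ y, p t x y ∂ϖ) = (∫⁻ y, ENNReal.ofReal (p t x y) ∂ϖ).toReal :=
        integral_eq_lintegral_of_nonneg_ae (ae_of_all _ fun y => hp0 t x y)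
          hint.aestronglyMeasurable
      -- bound 2 : F ≤ C'' * ρ t ^ β
      have hR2 : (∫ y, p t x y ∂ϖ) ≤ C'' * ρ t ^ β := by
        rw [hrepr]
        apply ENNReal.toReal_le_of_le_ofReal (by positivity)
        calc ∫⁻ y, ENNReal.ofReal (p t x y) ∂ϖ
            ≤ ENNReal.ofReal (C' * ρ t ^ n) * L := key
          _ ≤ ENNReal.ofReal (C' * ρ t ^ n) * ENNReal.ofReal (a₃ * (K * lam ^ (-s))) :=
              mul_le_mul_right hL2 _
          _ = ENNReal.ofReal (C' * ρ t ^ n * (a₃ * (K * lam ^ (-s)))) :=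
              (ENNReal.ofReal_mul (by positivity)).symm
          _ = ENNReal.ofReal (C'' * ρ t ^ β) := by
              congr 1
              have hsplit : lam ^ (-s) = a₄ ^ (-s) * ρ t ^ (-s) := by
                rw [hlam, Real.mul_rpow ha₄.le hρt.le]
              have hpow : ρ t ^ n * ρ t ^ (-s) = ρ t ^ β := by
                rw [← Real.rpow_natCast (ρ t) n, ← Real.rpow_add hρt]
                congr 1
                all_goals (rw [hβ]; ring)
              calc C' * ρ t ^ n * (a₃ * (K * lam ^ (-s)))
                  = C' * a₃ * K * a₄ ^ (-s) * (ρ t ^ n * ρ t ^ (-s)) := by rw [hsplit]; ring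
                _ = C'' * ρ t ^ β := by rw [hpow, hC'']
      -- bound 1 : crude
      have hR1 : (∫ y, p t x y ∂ϖ) ≤ C' * ρ t ^ n * (a₃ * (ϖ Set.univ).toReal) := by
        rw [hrepr]
        apply ENNReal.toReal_le_of_le_ofReal (by positivity)
        calc ∫⁻ y, ENNReal.ofReal (p t x y) ∂ϖ
            ≤ ENNReal.ofReal (C' * ρ t ^ n) * L := key
          _ ≤ ENNReal.ofReal (C' * ρ t ^ n) * (ENNReal.ofReal a₃ * ϖ Set.univ) :=
              mul_le_mul_right hL1 _
          _ = ENNReal.ofReal (C' * ρ t ^ n * (a₃ * (ϖ Set.univ).toReal)) := by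
              rw [ENNReal.ofReal_mul (show (0:ℝ) ≤ C' * ρ t ^ n by positivity),
                ENNReal.ofReal_mul ha₃.le, ENNReal.ofReal_toReal (measure_ne_top ϖ _)]
      -- combine
      rw [hG]
      rcases le_or_gt 0 β with hb | hb
      · have hγβ : γ = β := max_eq_left hb
        have hstep : ρ t ^ β ≤ (c * t ^ (-1/α)) ^ β :=
          Real.rpow_le_rpow hρt.le (hρ t ht) hb
        have hrw : (c * t ^ (-1/α)) ^ β = c ^ β * t ^ (-(β/α)) := by
          rw [Real.mul_rpow hc.le (Real.rpow_nonneg ht.1.le _),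
            ← Real.rpow_mul ht.1.le]
          congr 2
          field_simp
        have : (∫ y, p t x y ∂ϖ) ≤ B * t ^ (-(γ/α)) := by
          calc (∫ y, p t x y ∂ϖ) ≤ C'' * ρ t ^ β := hR2
            _ ≤ C'' * (c ^ β * t ^ (-(β/α))) := by
                rw [← hrw]
                exact mul_le_mul_of_nonneg_left hstep hC''pos.le
            _ = B * t ^ (-(γ/α)) := by rw [hB, hγβ]; ring
        linarith
      · have hγ0' : γ = 0 := max_eq_right hb.le
        rcases le_or_gt 1 (ρ t) with hρ1 | hρ1
        · have : (∫ y, p t x y ∂ϖ) ≤ C'' := by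
            calc (∫ y, p t x y ∂ϖ) ≤ C'' * ρ t ^ β := hR2
              _ ≤ C'' * 1 := mul_le_mul_of_nonneg_left
                  (Real.rpow_le_one_of_one_le_of_nonpos hρ1 hb.le) hC''pos.le
              _ = C'' := mul_one _
          have hBt : B * t ^ (-(γ/α)) = C'' := by
            rw [hB, hγ0']
            simp [Real.rpow_zero]
          linarith [hA0]
        · have : (∫ y, p t x y ∂ϖ) ≤ A := by
            calc (∫ y, p t x y ∂ϖ) ≤ C' * ρ t ^ n * (a₃ * (ϖ Set.univ).toReal) := hR1
              _ ≤ C' * 1 * (a₃ * (ϖ Set.univ).toReal) := by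
                  apply mul_le_mul_of_nonneg_right _ (by positivity)
                  exact mul_le_mul_of_nonneg_left
                    (pow_le_one₀ hρt.le hρ1.le) hC'.le
              _ = A := by rw [hA]; ring
          have hBt : 0 ≤ B * t ^ (-(γ/α)) :=
            mul_nonneg hB0 (Real.rpow_nonneg ht.1.le _)
          linarith
    · rw [integral_undef hint]
      exact hGnn t ht
  by_cases hF : IntegrableOn (fun t => ∫ y, p t x y ∂ϖ) (Set.Ioc (0:ℝ) 1)
  · exact setIntegral_mono_on hF hGint measurableSet_Ioc claim
  · rw [integral_undef hF]
    exact setIntegral_nonneg measurableSet_Ioc hGnn
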